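/- Let σ be sampled from the general nearest-neighbor spin system on the torus 𝕋_L^d with spin space (S,𝒮,λ) and interaction h. Define V₀ := {v ∈ Λ : v₁ ∉ {1,…,L−1}} and the reflection R : Λ → Λ by R(v) := (−v₁, v₂, …, v_d) if v₁ ≠ L and R(v) := (L, v₂, …, v_d) if v₁ = L, and set (Rσ)_v := σ_{R(v)}. Then for every bounded measurable function f : S^Λ → ℂ such that f(σ) depends only on the restriction σ|_{V₀}, the expectation E(f(σ) · conj(f(Rσ))) is a non-negative real number. (Reflection positivity through vertices.) -/

import Mathlib

open MeasureTheory
open scoped BigOperators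

/-- The `d`-dimensional discrete torus of side length `m` (for `m = 2L` this is `𝕋_L^d`):
vertices are `(ZMod m)^d` and two vertices are adjacent when they agree in all but one
coordinate and differ by exactly `1` modulo `m` in that coordinate. -/
def torusGraph (d m : ℕ) : SimpleGraph (Fin d → ZMod m) where
  Adj u v := u ≠ v ∧ ∃ i, (∀ j, j ≠ i → u j = v j) ∧ (u i = v i + 1 ∨ v i = u i + 1)
  symm := by
    constructor
    rintro u v ⟨hne, i, hji, hi⟩
    exact ⟨hne.symm, i, fun j hj => (hji j hj).symm, hi.symm⟩
  loopless := by constructor; rintro u ⟨hne, -⟩; exact hne rfl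

instance torusAdjDecidable (d m : ℕ) : DecidableRel (torusGraph d m).Adj := fun u v =>
  inferInstanceAs
    (Decidable (u ≠ v ∧ ∃ i, (∀ j, j ≠ i → u j = v j) ∧ (u i = v i + 1 ∨ v i = u i + 1)))

/-- The Boltzmann weight `∏_{{u,v} ∈ E(𝕋)} h(σ_u, σ_v)` of a configuration of the general
nearest-neighbour spin system with (symmetric) interaction `h` on the discrete torus. -/
noncomputable def nnWeight (d m : ℕ) [NeZero m] {S : Type} (h : S → S → ℝ)
    (hsymm : ∀ a b, h a b = h b a) (σ : (Fin d → ZMod m) → S) : ℝ :=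
  ∏ e ∈ (torusGraph d m).edgeFinset,
    Sym2.lift ⟨fun u v => h (σ u) (σ v), fun u v => hsymm (σ u) (σ v)⟩ e


set_option linter.unusedSectionVars false
set_option maxHeartbeats 1000000

namespace RPaux


variable {L : ℕ}

/-- plane vertices (coordinate value 0 or L) -/
def pP (L : ℕ) [NeZero (2 * L)] (x : ZMod (2 * L)) : Prop := x.val = 0 ∨ x.val = L
/-- plus vertices -/
def pPlus (L : ℕ) [NeZero (2 * L)] (x : ZMod (2 * L)) : Prop := 0 < x.val ∧ x.val < L
/-- minus vertices -/
def pMinus (L : ℕ) [NeZero (2 * L)] (x : ZMod (2 * L)) : Prop := L < x.val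

instance [NeZero (2 * L)] : DecidablePred (pP L) := fun x => by unfold pP; infer_instance
instance [NeZero (2 * L)] : DecidablePred (pPlus L) := fun x => by unfold pPlus; infer_instance
instance [NeZero (2 * L)] : DecidablePred (pMinus L) := fun x => by unfold pMinus; infer_instance

section basic
variable [NeZero (2 * L)]

theorem val2L (x : ZMod (2 * L)) : x.val < 2 * L := ZMod.val_lt x

theorem neg_val' (x : ZMod (2 * L)) :
    (-x).val = if x.val = 0 then 0 else 2 * L - x.val := by
  rw [ZMod.neg_val]
  simp [ZMod.val_eq_zero]

theorem pMinus_of_not {x : ZMod (2 * L)} (h1 : ¬ pP L x) (h2 : ¬ pPlus L x) : pMinus L x := by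
  have := val2L x; unfold pP pPlus pMinus at *; omega

theorem pPlus_neg {x : ZMod (2 * L)} (h : pMinus L x) : pPlus L (-x) := by
  have h2 := val2L x
  unfold pMinus at h
  unfold pPlus
  rw [neg_val']
  have hL : 0 < L := by omega
  split_ifs with h0 <;> omega

theorem pMinus_neg {x : ZMod (2 * L)} (h : pPlus L x) : pMinus L (-x) := by
  have h2 := val2L x
  unfold pPlus at h
  unfold pMinus
  rw [neg_val']
  split_ifs with h0 <;> omega

theorem not_pPlus_of_pMinus {x : ZMod (2 * L)} (h : pMinus L x) : ¬ pPlus L x := by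
  unfold pMinus at h; unfold pPlus; omega

theorem not_pP_of_pMinus {x : ZMod (2 * L)} (h : pMinus L x) : ¬ pP L x := by
  unfold pMinus at h; unfold pP; omega

theorem not_pP_of_pPlus {x : ZMod (2 * L)} (h : pPlus L x) : ¬ pP L x := by
  unfold pPlus at h; unfold pP; omega

theorem not_pMinus_of_pP {x : ZMod (2 * L)} (h : pP L x) : ¬ pMinus L x := by
  unfold pP at h; unfold pMinus; omega

theorem neg_eq_self_of_pP {x : ZMod (2 * L)} (h : pP L x) : -x = x := by
  rcases h with h | h
  · have : x = 0 := by rwa [ZMod.val_eq_zero] at h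
    simp [this]
  · have hx : ((x.val : ℕ) : ZMod (2 * L)) = x := ZMod.natCast_rightInverse x
    have hadd : x + x = 0 := by
      rw [← hx, h, ← Nat.cast_add]
      have : L + L = 2 * L := by ring
      rw [this, ZMod.natCast_self]
    exact neg_eq_of_add_eq_zero_left hadd

end basic


section basic2
variable [NeZero (2 * L)]
theorem not_pMinus_of_pPlus {x : ZMod (2 * L)} (h : pPlus L x) : ¬ pMinus L x :=
  fun hm => not_pPlus_of_pMinus hm h
end basic2

section refl

variable {d : ℕ} [NeZero (2 * L)] (i0 : Fin d)

/-- the reflection on the torus -/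
def rfl0 (i0 : Fin d) (v : Fin d → ZMod (2 * L)) : Fin d → ZMod (2 * L) :=
  Function.update v i0 (-(v i0))

theorem rfl0_apply_self (v : Fin d → ZMod (2 * L)) : rfl0 i0 v i0 = -(v i0) :=
  Function.update_self _ _ _

theorem rfl0_apply_ne (v : Fin d → ZMod (2 * L)) {j : Fin d} (hj : j ≠ i0) :
    rfl0 i0 v j = v j := Function.update_of_ne hj _ _

theorem rfl0_rfl0 (v : Fin d → ZMod (2 * L)) : rfl0 i0 (rfl0 i0 v) = v := by
  funext j
  by_cases hj : j = i0
  · subst hj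
    rw [rfl0_apply_self, rfl0_apply_self, neg_neg]
  · rw [rfl0_apply_ne _ _ hj, rfl0_apply_ne _ _ hj]

theorem rfl0_eq_self_of_pP {v : Fin d → ZMod (2 * L)} (h : pP L (v i0)) :
    rfl0 i0 v = v := by
  funext j
  by_cases hj : j = i0
  · subst hj; rw [rfl0_apply_self, neg_eq_self_of_pP h]
  · rw [rfl0_apply_ne _ _ hj]

theorem adj_rfl0 {u v : Fin d → ZMod (2 * L)} (h : (torusGraph d (2 * L)).Adj u v) :
    (torusGraph d (2 * L)).Adj (rfl0 i0 u) (rfl0 i0 v) := by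
  obtain ⟨hne, i, hj, hor⟩ := h
  refine ⟨fun hc => hne ?_, i, fun j hji => ?_, ?_⟩
  · have := congrArg (rfl0 i0) hc
    rwa [rfl0_rfl0, rfl0_rfl0] at this
  · by_cases hj0 : j = i0
    · subst hj0
      rw [rfl0_apply_self, rfl0_apply_self, hj _ hji]
    · rw [rfl0_apply_ne _ _ hj0, rfl0_apply_ne _ _ hj0, hj _ hji]
  · by_cases hi : i = i0
    · subst hi
      rw [rfl0_apply_self, rfl0_apply_self]
      rcases hor with h1 | h1
      · right; rw [h1]; ring
      · left; rw [h1]; ring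
    · rw [rfl0_apply_ne _ _ hi, rfl0_apply_ne _ _ hi]
      exact hor

theorem not_adj_plus_minus (hL : 1 ≤ L) {u v : Fin d → ZMod (2 * L)}
    (hu : pPlus L (u i0)) (hv : pMinus L (v i0)) : ¬ (torusGraph d (2 * L)).Adj u v := by
  rintro ⟨hne, i, hj, hor⟩
  by_cases hi : i = i0
  · subst hi
    have h1v : ((1 : ZMod (2 * L))).val = 1 := by
      have : (((1 : ℕ) : ZMod (2 * L))).val = 1 := ZMod.val_cast_of_lt (by omega)
      simpa using this
    have hu2 := val2L (u i)
    have hv2 := val2L (v i)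
    obtain ⟨hu1, hu3⟩ := hu
    rcases hor with h1 | h1
    · have : (u i).val = ((v i).val + 1) % (2 * L) := by
        rw [h1, ZMod.val_add, h1v]
      rcases Nat.lt_or_ge ((v i).val + 1) (2 * L) with hlt | hge
      · rw [Nat.mod_eq_of_lt hlt] at this
        unfold pMinus at hv; omega
      · have he : (v i).val + 1 = 2 * L := by omega
        rw [he, Nat.mod_self] at this
        omega
    · have : (v i).val = ((u i).val + 1) % (2 * L) := by
        rw [h1, ZMod.val_add, h1v]
      rw [Nat.mod_eq_of_lt (by omega)] at this
      unfold pMinus at hv; omega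
  · have he : u i0 = v i0 := hj i0 (Ne.symm hi)
    rw [he] at hu
    unfold pPlus at hu; unfold pMinus at hv; omega

theorem not_pPlus_neighbor (hL : 1 ≤ L) {u v : Fin d → ZMod (2 * L)}
    (h : (torusGraph d (2 * L)).Adj u v) (hu : pMinus L (u i0)) : ¬ pPlus L (v i0) :=
  fun hp => not_adj_plus_minus i0 hL hp hu h.symm


end refl

section glue

variable {d : ℕ} [NeZero (2 * L)] (i0 : Fin d) {S : Type}

theorem pPlus_rfl0 {v : Fin d → ZMod (2 * L)} (h1 : ¬ pP L (v i0)) (h2 : ¬ pPlus L (v i0)) :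
    pPlus L (rfl0 i0 v i0) := by
  rw [rfl0_apply_self]
  exact pPlus_neg (pMinus_of_not h1 h2)

/-- glue three partial configurations into one -/
def glue (i0 : Fin d) (p : {v : Fin d → ZMod (2 * L) // pP L (v i0)} → S)
    (s t : {v : Fin d → ZMod (2 * L) // pPlus L (v i0)} → S) (v : Fin d → ZMod (2 * L)) : S :=
  if h1 : pP L (v i0) then p ⟨v, h1⟩
  else if h2 : pPlus L (v i0) then s ⟨v, h2⟩
  else t ⟨rfl0 i0 v, pPlus_rfl0 i0 h1 h2⟩

variable (p : {v : Fin d → ZMod (2 * L) // pP L (v i0)} → S)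
  (s t s' t' : {v : Fin d → ZMod (2 * L) // pPlus L (v i0)} → S)

theorem glue_pP {v : Fin d → ZMod (2 * L)} (h : pP L (v i0)) :
    glue i0 p s t v = p ⟨v, h⟩ := dif_pos h

theorem glue_pPlus {v : Fin d → ZMod (2 * L)} (h : pPlus L (v i0)) :
    glue i0 p s t v = s ⟨v, h⟩ := by
  rw [glue, dif_neg (not_pP_of_pPlus h), dif_pos h]

theorem glue_pMinus {v : Fin d → ZMod (2 * L)} (h : pMinus L (v i0)) :
    glue i0 p s t v = t ⟨rfl0 i0 v, pPlus_rfl0 i0 (not_pP_of_pMinus h) (not_pPlus_of_pMinus h)⟩ := by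
  rw [glue, dif_neg (not_pP_of_pMinus h), dif_neg (not_pPlus_of_pMinus h)]

/-- the values of `glue` away from the minus region do not depend on `t` -/
theorem glue_eq_of_not_minus {v : Fin d → ZMod (2 * L)} (h : ¬ pMinus L (v i0)) :
    glue i0 p s t v = glue i0 p s t' v := by
  unfold glue
  split_ifs with h1 h2
  · rfl
  · rfl
  · exact absurd (pMinus_of_not h1 h2) h

/-- the values of `glue` away from the plus region do not depend on `s` -/
theorem glue_eq_of_not_plus {v : Fin d → ZMod (2 * L)} (h : ¬ pPlus L (v i0)) :
    glue i0 p s t v = glue i0 p s' t v := by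
  unfold glue
  split_ifs with h1
  · rfl
  · rfl

/-- composing `glue` with the reflection swaps the two plus-configurations -/
theorem glue_comp_rfl0 :
    (fun v => glue i0 p s t (rfl0 i0 v)) = glue i0 p t s := by
  funext v
  by_cases h1 : pP L (v i0)
  · rw [rfl0_eq_self_of_pP i0 h1, glue_pP i0 p s t h1, glue_pP i0 p t s h1]
  by_cases h2 : pPlus L (v i0)
  · have hm : pMinus L (rfl0 i0 v i0) := by rw [rfl0_apply_self]; exact pMinus_neg h2
    rw [glue_pMinus i0 p s t hm, glue_pPlus i0 p t s h2]
    congr 1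
    exact Subtype.ext (rfl0_rfl0 i0 v)
  · have hm : pMinus L (v i0) := pMinus_of_not h1 h2
    have hp : pPlus L (rfl0 i0 v i0) := pPlus_rfl0 i0 h1 h2
    rw [glue_pPlus i0 p s t hp, glue_pMinus i0 p t s hm]

/-- `glue` is measurable in the three arguments jointly -/
theorem measurable_glue [MeasurableSpace S] :
    Measurable (fun x : ({v : Fin d → ZMod (2 * L) // pP L (v i0)} → S) ×
        (({v : Fin d → ZMod (2 * L) // pPlus L (v i0)} → S) ×
         ({v : Fin d → ZMod (2 * L) // pPlus L (v i0)} → S)) =>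
      glue i0 x.1 x.2.1 x.2.2) := by
  apply measurable_pi_lambda
  intro v
  unfold glue
  split_ifs with h1 h2
  · exact (measurable_pi_apply _).comp measurable_fst
  · exact (measurable_pi_apply _).comp (measurable_fst.comp measurable_snd)
  · exact (measurable_pi_apply _).comp (measurable_snd.comp measurable_snd)

/-- the vertex partition equivalence -/
def vertEquiv (i0 : Fin d) :
    ({v : Fin d → ZMod (2 * L) // pP L (v i0)} ⊕
      ({v : Fin d → ZMod (2 * L) // pPlus L (v i0)} ⊕
       {v : Fin d → ZMod (2 * L) // pPlus L (v i0)})) ≃ (Fin d → ZMod (2 * L)) where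
  toFun := Sum.elim Subtype.val (Sum.elim Subtype.val (fun w => rfl0 i0 w.val))
  invFun v :=
    if h1 : pP L (v i0) then .inl ⟨v, h1⟩
    else if h2 : pPlus L (v i0) then .inr (.inl ⟨v, h2⟩)
    else .inr (.inr ⟨rfl0 i0 v, pPlus_rfl0 i0 h1 h2⟩)
  left_inv x := by
    rcases x with ⟨v, hv⟩ | (⟨v, hv⟩ | ⟨v, hv⟩)
    · dsimp only [Sum.elim_inl]
      rw [dif_pos hv]
    · dsimp only [Sum.elim_inr, Sum.elim_inl]
      rw [dif_neg (not_pP_of_pPlus hv), dif_pos hv]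
    · dsimp only [Sum.elim_inr]
      have hm : pMinus L (rfl0 i0 v i0) := by rw [rfl0_apply_self]; exact pMinus_neg hv
      rw [dif_neg (not_pP_of_pMinus hm), dif_neg (not_pPlus_of_pMinus hm)]
      congr 1
      congr 1
      exact Subtype.ext (rfl0_rfl0 i0 v)
  right_inv v := by
    dsimp only
    by_cases h1 : pP L (v i0)
    · rw [dif_pos h1]; rfl
    by_cases h2 : pPlus L (v i0)
    · rw [dif_neg h1, dif_pos h2]; rfl
    · rw [dif_neg h1, dif_neg h2]
      simp only [Sum.elim_inr]
      exact rfl0_rfl0 i0 v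

theorem vertEquiv_inl (x : {v : Fin d → ZMod (2 * L) // pP L (v i0)}) :
    vertEquiv i0 (.inl x) = x.val := rfl
theorem vertEquiv_inrl (x : {v : Fin d → ZMod (2 * L) // pPlus L (v i0)}) :
    vertEquiv i0 (.inr (.inl x)) = x.val := rfl
theorem vertEquiv_inrr (x : {v : Fin d → ZMod (2 * L) // pPlus L (v i0)}) :
    vertEquiv i0 (.inr (.inr x)) = rfl0 i0 x.val := rfl


end glue

section weight

variable {d : ℕ} [NeZero (2 * L)] (i0 : Fin d) {S : Type}
  (h : S → S → ℝ) (hsymm : ∀ a b, h a b = h b a)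

/-- single-edge Boltzmann factor -/
noncomputable def termF (σ : (Fin d → ZMod (2 * L)) → S)
    (e : Sym2 (Fin d → ZMod (2 * L))) : ℝ :=
  Sym2.lift ⟨fun u v => h (σ u) (σ v), fun u v => hsymm (σ u) (σ v)⟩ e

theorem nnWeight_eq_prod_termF (σ : (Fin d → ZMod (2 * L)) → S) :
    nnWeight d (2 * L) h hsymm σ =
      ∏ e ∈ (torusGraph d (2 * L)).edgeFinset, termF h hsymm σ e := rfl

theorem termF_mk (σ : (Fin d → ZMod (2 * L)) → S) (u v : Fin d → ZMod (2 * L)) :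
    termF h hsymm σ s(u, v) = h (σ u) (σ v) := rfl

theorem termF_nonneg (hnn : ∀ a b, 0 ≤ h a b) (σ : (Fin d → ZMod (2 * L)) → S)
    (e : Sym2 (Fin d → ZMod (2 * L))) : 0 ≤ termF h hsymm σ e := by
  induction e using Sym2.ind with
  | _ u v => exact hnn _ _

theorem termF_le (M : ℝ) (hb : ∀ a b, h a b ≤ M) (σ : (Fin d → ZMod (2 * L)) → S)
    (e : Sym2 (Fin d → ZMod (2 * L))) : termF h hsymm σ e ≤ M := by
  induction e using Sym2.ind with
  | _ u v => exact hb _ _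

theorem termF_congr (σ τ : (Fin d → ZMod (2 * L)) → S)
    (e : Sym2 (Fin d → ZMod (2 * L))) (hagree : ∀ w ∈ e, σ w = τ w) :
    termF h hsymm σ e = termF h hsymm τ e := by
  induction e using Sym2.ind with
  | _ u v =>
    rw [termF_mk, termF_mk, hagree u (Sym2.mem_iff.2 (Or.inl rfl)),
      hagree v (Sym2.mem_iff.2 (Or.inr rfl))]

theorem termF_comp_rfl0 (σ : (Fin d → ZMod (2 * L)) → S)
    (e : Sym2 (Fin d → ZMod (2 * L))) :
    termF h hsymm σ (Sym2.map (rfl0 i0) e) = termF h hsymm (fun v => σ (rfl0 i0 v)) e := by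
  induction e using Sym2.ind with
  | _ u v => rw [Sym2.map_pair_eq, termF_mk, termF_mk]

/-- "touches the minus region" predicate on edges -/
def Qm (e : Sym2 (Fin d → ZMod (2 * L))) : Prop := ∃ w ∈ e, pMinus L (w i0)
/-- "touches the plus region" predicate on edges -/
def Qp (e : Sym2 (Fin d → ZMod (2 * L))) : Prop := ∃ w ∈ e, pPlus L (w i0)

open Classical in
/-- the edges touching the minus region -/
noncomputable def EmS : Finset (Sym2 (Fin d → ZMod (2 * L))) :=
  (torusGraph d (2 * L)).edgeFinset.filter (Qm i0)

open Classical in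
/-- the edges touching the plus region but not the minus region -/
noncomputable def EpS : Finset (Sym2 (Fin d → ZMod (2 * L))) :=
  ((torusGraph d (2 * L)).edgeFinset.filter (fun e => ¬ Qm i0 e)).filter (Qp i0)

open Classical in
/-- the edges inside the fixed plane -/
noncomputable def E0S : Finset (Sym2 (Fin d → ZMod (2 * L))) :=
  ((torusGraph d (2 * L)).edgeFinset.filter (fun e => ¬ Qm i0 e)).filter (fun e => ¬ Qp i0 e)

open Classical in
theorem weight_split (σ : (Fin d → ZMod (2 * L)) → S) :
    nnWeight d (2 * L) h hsymm σ =
      (∏ e ∈ EmS i0, termF h hsymm σ e) *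
        ((∏ e ∈ EpS i0, termF h hsymm σ e) * (∏ e ∈ E0S i0, termF h hsymm σ e)) := by
  rw [nnWeight_eq_prod_termF, ← Finset.prod_filter_mul_prod_filter_not
      (torusGraph d (2 * L)).edgeFinset (Qm i0),
    ← Finset.prod_filter_mul_prod_filter_not
      ((torusGraph d (2 * L)).edgeFinset.filter (fun e => ¬ Qm i0 e)) (Qp i0)]
  rfl

theorem mem_EmS {e : Sym2 (Fin d → ZMod (2 * L))} :
    e ∈ EmS i0 ↔ e ∈ (torusGraph d (2 * L)).edgeFinset ∧ Qm i0 e := by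
  classical
  simp [EmS]

theorem mem_EpS {e : Sym2 (Fin d → ZMod (2 * L))} :
    e ∈ EpS i0 ↔ e ∈ (torusGraph d (2 * L)).edgeFinset ∧ ¬ Qm i0 e ∧ Qp i0 e := by
  classical
  simp [EpS, and_assoc]

theorem mem_E0S {e : Sym2 (Fin d → ZMod (2 * L))} :
    e ∈ E0S i0 ↔ e ∈ (torusGraph d (2 * L)).edgeFinset ∧ ¬ Qm i0 e ∧ ¬ Qp i0 e := by
  classical
  simp [E0S, and_assoc]

theorem map_rfl0_mem_edgeFinset {e : Sym2 (Fin d → ZMod (2 * L))}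
    (he : e ∈ (torusGraph d (2 * L)).edgeFinset) :
    Sym2.map (rfl0 i0) e ∈ (torusGraph d (2 * L)).edgeFinset := by
  induction e using Sym2.ind with
  | _ u v =>
    rw [Sym2.map_pair_eq, SimpleGraph.mem_edgeFinset, SimpleGraph.mem_edgeSet]
    rw [SimpleGraph.mem_edgeFinset, SimpleGraph.mem_edgeSet] at he
    exact adj_rfl0 i0 he

theorem map_rfl0_map_rfl0 (e : Sym2 (Fin d → ZMod (2 * L))) :
    Sym2.map (rfl0 i0) (Sym2.map (rfl0 i0) e) = e := by
  induction e using Sym2.ind with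
  | _ u v => rw [Sym2.map_pair_eq, Sym2.map_pair_eq, rfl0_rfl0, rfl0_rfl0]

theorem endpoints_not_plus (hL : 1 ≤ L) {e : Sym2 (Fin d → ZMod (2 * L))}
    (he : e ∈ (torusGraph d (2 * L)).edgeFinset) (hm : Qm i0 e) :
    ∀ w ∈ e, ¬ pPlus L (w i0) := by
  induction e using Sym2.ind with
  | _ u v =>
    rw [SimpleGraph.mem_edgeFinset, SimpleGraph.mem_edgeSet] at he
    obtain ⟨w, hw, hwm⟩ := hm
    intro w' hw'
    rw [Sym2.mem_iff] at hw hw'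
    rcases hw with rfl | rfl <;> rcases hw' with rfl | rfl
    · exact not_pPlus_of_pMinus hwm
    · exact not_pPlus_neighbor i0 hL he hwm
    · exact not_pPlus_neighbor i0 hL he.symm hwm
    · exact not_pPlus_of_pMinus hwm

theorem not_minus_map {e : Sym2 (Fin d → ZMod (2 * L))} (hL : 1 ≤ L)
    (he : e ∈ (torusGraph d (2 * L)).edgeFinset) (hm : Qm i0 e) :
    ¬ Qm i0 (Sym2.map (rfl0 i0) e) := by
  rintro ⟨w', hw', hmin⟩
  rw [Sym2.mem_map] at hw'
  obtain ⟨w, hw, rfl⟩ := hw'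
  have hnp : ¬ pPlus L (w i0) := endpoints_not_plus i0 hL he hm w hw
  by_cases hP : pP L (w i0)
  · rw [rfl0_eq_self_of_pP i0 hP] at hmin
    exact not_pMinus_of_pP hP hmin
  · have hwm : pMinus L (w i0) := pMinus_of_not hP hnp
    have : pPlus L (rfl0 i0 w i0) := by rw [rfl0_apply_self]; exact pPlus_neg hwm
    exact not_pPlus_of_pMinus hmin this

theorem plus_map {e : Sym2 (Fin d → ZMod (2 * L))} (hm : Qm i0 e) :
    Qp i0 (Sym2.map (rfl0 i0) e) := by
  obtain ⟨w, hw, hwm⟩ := hm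
  refine ⟨rfl0 i0 w, Sym2.mem_map.2 ⟨w, hw, rfl⟩, ?_⟩
  rw [rfl0_apply_self]
  exact pPlus_neg hwm

theorem minus_map {e : Sym2 (Fin d → ZMod (2 * L))} (hp : Qp i0 e) :
    Qm i0 (Sym2.map (rfl0 i0) e) := by
  obtain ⟨w, hw, hwp⟩ := hp
  refine ⟨rfl0 i0 w, Sym2.mem_map.2 ⟨w, hw, rfl⟩, ?_⟩
  rw [rfl0_apply_self]
  exact pMinus_neg hwp

/-- the reflection identity for the product over minus-edges -/
theorem prod_EmS (hL : 1 ≤ L) (σ : (Fin d → ZMod (2 * L)) → S) :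
    ∏ e ∈ EmS i0, termF h hsymm σ e =
      ∏ e ∈ EpS i0, termF h hsymm (fun v => σ (rfl0 i0 v)) e := by
  refine Finset.prod_nbij' (Sym2.map (rfl0 i0)) (Sym2.map (rfl0 i0)) ?_ ?_ ?_ ?_ ?_
  · intro e he
    rw [mem_EmS] at he
    exact (mem_EpS i0).2 ⟨map_rfl0_mem_edgeFinset i0 he.1,
      not_minus_map i0 hL he.1 he.2, plus_map i0 he.2⟩
  · intro e he
    rw [mem_EpS] at he
    exact (mem_EmS i0).2 ⟨map_rfl0_mem_edgeFinset i0 he.1, minus_map i0 he.2.2⟩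
  · intro e _; exact map_rfl0_map_rfl0 i0 e
  · intro e _; exact map_rfl0_map_rfl0 i0 e
  · intro e he
    rw [termF_comp_rfl0]
    refine termF_congr h hsymm _ _ e (fun w _ => ?_)
    rw [rfl0_rfl0]

/-- products over plus-edges only depend on the non-minus part of the configuration -/
theorem prod_EpS_congr (σ τ : (Fin d → ZMod (2 * L)) → S)
    (hagree : ∀ v, ¬ pMinus L (v i0) → σ v = τ v) :
    ∏ e ∈ EpS i0, termF h hsymm σ e = ∏ e ∈ EpS i0, termF h hsymm τ e := by
  refine Finset.prod_congr rfl (fun e he => ?_)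
  rw [mem_EpS] at he
  refine termF_congr h hsymm _ _ e (fun w hw => ?_)
  exact hagree w (fun hm => he.2.1 ⟨w, hw, hm⟩)

/-- products over plane-edges only depend on the plane part of the configuration -/
theorem prod_E0S_congr (σ τ : (Fin d → ZMod (2 * L)) → S)
    (hagree : ∀ v, ¬ pMinus L (v i0) → ¬ pPlus L (v i0) → σ v = τ v) :
    ∏ e ∈ E0S i0, termF h hsymm σ e = ∏ e ∈ E0S i0, termF h hsymm τ e := by
  refine Finset.prod_congr rfl (fun e he => ?_)
  rw [mem_E0S] at he
  refine termF_congr h hsymm _ _ e (fun w hw => ?_)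
  exact hagree w (fun hm => he.2.1 ⟨w, hw, hm⟩) (fun hp => he.2.2 ⟨w, hw, hp⟩)


end weight
end RPaux


namespace RPaux

theorem main {d L : ℕ} [NeZero (2 * L)] (hL : 1 ≤ L) (i0 : Fin d) {S : Type}
    [MeasurableSpace S] (lam : Measure S) [IsFiniteMeasure lam]
    (h : S → S → ℝ) (hsymm : ∀ a b, h a b = h b a) (hnonneg : ∀ a b, 0 ≤ h a b)
    (hbdd : ∃ M : ℝ, ∀ a b, h a b ≤ M) (hmeas : Measurable (Function.uncurry h))
    (s0 : S)
    (f : ((Fin d → ZMod (2 * L)) → S) → ℂ) (hfmeas : Measurable f)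
    (hfbdd : ∃ M : ℝ, ∀ σ, ‖f σ‖ ≤ M)
    (hfdep : ∀ σ τ : (Fin d → ZMod (2 * L)) → S,
      (∀ v, ¬ pPlus L (v i0) → σ v = τ v) → f σ = f τ) :
    ∃ r : ℝ, 0 ≤ r ∧
      (∫ σ : (Fin d → ZMod (2 * L)) → S,
          f σ * (starRingEnd ℂ) (f (fun v => σ (rfl0 i0 v))) *
            ((nnWeight d (2 * L) h hsymm σ : ℝ) : ℂ)
        ∂(Measure.pi fun _ : Fin d → ZMod (2 * L) => lam)) = (r : ℂ) := by
  classical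
  obtain ⟨M, hM⟩ := hbdd
  obtain ⟨Mf, hMf⟩ := hfbdd
  -- the integrand
  obtain ⟨G, hG⟩ : ∃ G : ((Fin d → ZMod (2 * L)) → S) → ℂ,
      G = fun σ => f σ * (starRingEnd ℂ) (f (fun v => σ (rfl0 i0 v))) *
        ((nnWeight d (2 * L) h hsymm σ : ℝ) : ℂ) := ⟨_, rfl⟩
  -- measurability of the weight
  have hWmeas : Measurable (fun σ : (Fin d → ZMod (2 * L)) → S =>
      nnWeight d (2 * L) h hsymm σ) := by
    unfold nnWeight
    refine Finset.measurable_prod _ (fun e _ => ?_)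
    induction e using Sym2.ind with
    | _ u v =>
      simp only [Sym2.lift_mk]
      have : Measurable fun σ : (Fin d → ZMod (2 * L)) → S =>
          Function.uncurry h (σ u, σ v) :=
        hmeas.comp ((measurable_pi_apply u).prodMk (measurable_pi_apply v))
      exact this
  have hRmeas : Measurable (fun σ : (Fin d → ZMod (2 * L)) → S =>
      (fun v => σ (rfl0 i0 v))) :=
    measurable_pi_lambda _ (fun v => measurable_pi_apply _)
  have hGmeas : Measurable G := by
    rw [hG]
    simp only [starRingEnd_apply]
    exact ((hfmeas.mul (continuous_star.measurable.comp (hfmeas.comp hRmeas))).mul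
      (Complex.measurable_ofReal.comp hWmeas))
  -- bounds
  have hWnonneg : ∀ σ, 0 ≤ nnWeight d (2 * L) h hsymm σ := fun σ => by
    rw [nnWeight_eq_prod_termF]
    exact Finset.prod_nonneg (fun e _ => termF_nonneg h hsymm hnonneg σ e)
  have hWle : ∀ σ, nnWeight d (2 * L) h hsymm σ ≤
      (max M 0) ^ (torusGraph d (2 * L)).edgeFinset.card := fun σ => by
    rw [nnWeight_eq_prod_termF]
    calc ∏ e ∈ (torusGraph d (2 * L)).edgeFinset, termF h hsymm σ e
        ≤ ∏ _e ∈ (torusGraph d (2 * L)).edgeFinset, (max M 0) :=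
          Finset.prod_le_prod (fun e _ => termF_nonneg h hsymm hnonneg σ e)
            (fun e _ => le_trans (termF_le h hsymm M hM σ e) (le_max_left _ _))
      _ = _ := Finset.prod_const _
  have hGbdd : ∀ σ, ‖G σ‖ ≤
      (max Mf 0) * (max Mf 0) * (max M 0) ^ (torusGraph d (2 * L)).edgeFinset.card := by
    intro σ
    rw [hG]
    simp only [norm_mul, Complex.norm_conj, Complex.norm_real, Real.norm_eq_abs]
    have h1 : ‖f σ‖ ≤ max Mf 0 := le_trans (hMf σ) (le_max_left _ _)
    have h2 : ‖f (fun v => σ (rfl0 i0 v))‖ ≤ max Mf 0 :=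
      le_trans (hMf _) (le_max_left _ _)
    have h3 : |nnWeight d (2 * L) h hsymm σ| ≤
        (max M 0) ^ (torusGraph d (2 * L)).edgeFinset.card := by
      rw [abs_of_nonneg (hWnonneg σ)]; exact hWle σ
    exact mul_le_mul (mul_le_mul h1 h2 (norm_nonneg _) (le_max_right _ _)) h3
      (abs_nonneg _) (by positivity)
  -- the gluing measure-preserving map
  obtain ⟨Φ, hΦdef⟩ : ∃ Φ : (({v : Fin d → ZMod (2 * L) // pP L (v i0)} → S) ×
        (({v : Fin d → ZMod (2 * L) // pPlus L (v i0)} → S) ×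
         ({v : Fin d → ZMod (2 * L) // pPlus L (v i0)} → S))) →
        ((Fin d → ZMod (2 * L)) → S),
      Φ = ⇑(MeasurableEquiv.piCongrLeft (fun _ => S) (vertEquiv i0)) ∘
        (⇑(MeasurableEquiv.sumPiEquivProdPi (fun _ => S)).symm ∘
          Prod.map id ⇑(MeasurableEquiv.sumPiEquivProdPi (fun _ => S)).symm) := ⟨_, rfl⟩
  have mp : MeasurePreserving Φ
      ((Measure.pi fun _ : {v : Fin d → ZMod (2 * L) // pP L (v i0)} => lam).prod
        ((Measure.pi fun _ : {v : Fin d → ZMod (2 * L) // pPlus L (v i0)} => lam).prod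
         (Measure.pi fun _ : {v : Fin d → ZMod (2 * L) // pPlus L (v i0)} => lam)))
      (Measure.pi fun _ : Fin d → ZMod (2 * L) => lam) := by
    rw [hΦdef]
    exact (measurePreserving_piCongrLeft (fun _ : Fin d → ZMod (2 * L) => lam)
        (vertEquiv i0)).comp
      ((measurePreserving_sumPiEquivProdPi_symm (fun _ => lam)).comp
        ((MeasurePreserving.id _).prod
          (measurePreserving_sumPiEquivProdPi_symm (fun _ => lam))))
  have hΦapp : ∀ p s t, Φ (p, (s, t)) = glue i0 p s t := by
    intro p s t
    funext v
    obtain ⟨i, rfl⟩ := (vertEquiv i0).surjective v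
    rw [hΦdef]
    show (MeasurableEquiv.piCongrLeft (fun _ => S) (vertEquiv i0)) _ (vertEquiv i0 i) = _
    rw [MeasurableEquiv.coe_piCongrLeft, Equiv.piCongrLeft_apply_apply]
    rcases i with x | (x | x)
    · rw [show vertEquiv i0 (Sum.inl x) = x.val from rfl, glue_pP i0 p s t x.2]
      rfl
    · rw [show vertEquiv i0 (Sum.inr (Sum.inl x)) = x.val from rfl,
        glue_pPlus i0 p s t x.2]
      rfl
    · rw [show vertEquiv i0 (Sum.inr (Sum.inr x)) = rfl0 i0 x.val from rfl]
      have hm : pMinus L ((rfl0 i0 x.val) i0) := by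
        rw [rfl0_apply_self]; exact pMinus_neg x.2
      rw [glue_pMinus i0 p s t hm]
      show t x = _
      congr 1
      exact (Subtype.ext (rfl0_rfl0 i0 x.val)).symm
  -- the building blocks
  obtain ⟨B, hBdef⟩ : ∃ B : ({v : Fin d → ZMod (2 * L) // pP L (v i0)} → S) →
      ({v : Fin d → ZMod (2 * L) // pPlus L (v i0)} → S) → ℝ,
      B = fun p s => ∏ e ∈ EpS i0, termF h hsymm (glue i0 p s (fun _ => s0)) e := ⟨_, rfl⟩
  obtain ⟨wP, hwPdef⟩ : ∃ wP : ({v : Fin d → ZMod (2 * L) // pP L (v i0)} → S) → ℝ,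
      wP = fun p => ∏ e ∈ E0S i0,
        termF h hsymm (glue i0 p (fun _ => s0) (fun _ => s0)) e := ⟨_, rfl⟩
  obtain ⟨g, hgdef⟩ : ∃ g : ({v : Fin d → ZMod (2 * L) // pP L (v i0)} → S) →
      ({v : Fin d → ZMod (2 * L) // pPlus L (v i0)} → S) → ℂ,
      g = fun p t => f (glue i0 p (fun _ => s0) t) * ((B p t : ℝ) : ℂ) := ⟨_, rfl⟩
  have hwPnonneg : ∀ p, 0 ≤ wP p := fun p => by
    rw [hwPdef]
    exact Finset.prod_nonneg (fun e _ => termF_nonneg h hsymm hnonneg _ e)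
  have hfglue : ∀ p s t, f (glue i0 p s t) = f (glue i0 p (fun _ => s0) t) :=
    fun p s t => hfdep _ _ (fun v hv => glue_eq_of_not_plus i0 p s t (fun _ => s0) hv)
  have hW : ∀ p s t, nnWeight d (2 * L) h hsymm (glue i0 p s t)
      = B p t * (B p s * wP p) := by
    intro p s t
    rw [weight_split i0 h hsymm]
    congr 1
    · rw [prod_EmS i0 h hsymm hL, glue_comp_rfl0 i0 p s t,
        prod_EpS_congr i0 h hsymm _ _
          (fun v hv => glue_eq_of_not_minus i0 p t s (fun _ => s0) hv), hBdef]
    congr 1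
    · rw [prod_EpS_congr i0 h hsymm _ _
        (fun v hv => glue_eq_of_not_minus i0 p s t (fun _ => s0) hv), hBdef]
    · rw [hwPdef]
      refine prod_E0S_congr i0 h hsymm _ _ (fun v hm hp => ?_)
      have hP : pP L (v i0) := by
        by_contra hP
        exact hm (pMinus_of_not hP hp)
      rw [glue_pP i0 _ _ _ hP, glue_pP i0 _ _ _ hP]
  have hKey : ∀ p s t, G (glue i0 p s t) =
      ((wP p : ℝ) : ℂ) * ((starRingEnd ℂ) (g p s) * g p t) := by
    intro p s t
    rw [hG]
    show f (glue i0 p s t) *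
        (starRingEnd ℂ) (f (fun v => glue i0 p s t (rfl0 i0 v))) *
        ((nnWeight d (2 * L) h hsymm (glue i0 p s t) : ℝ) : ℂ) = _
    rw [glue_comp_rfl0 i0 p s t, hfglue p s t, hfglue p t s, hW p s t, hgdef]
    simp only [Complex.ofReal_mul, map_mul, Complex.conj_ofReal]
    ring
  -- integrability
  have hInt : Integrable (fun x => G (Φ x))
      ((Measure.pi fun _ : {v : Fin d → ZMod (2 * L) // pP L (v i0)} => lam).prod
        ((Measure.pi fun _ : {v : Fin d → ZMod (2 * L) // pPlus L (v i0)} => lam).prod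
         (Measure.pi fun _ : {v : Fin d → ZMod (2 * L) // pPlus L (v i0)} => lam))) := by
    refine Integrable.mono' (integrable_const
        ((max Mf 0) * (max Mf 0) * (max M 0) ^ (torusGraph d (2 * L)).edgeFinset.card))
      ((hGmeas.comp mp.measurable).aestronglyMeasurable) (ae_of_all _ (fun x => hGbdd _))
  -- the computation
  refine ⟨∫ p, wP p * Complex.normSq (∫ t, g p t
      ∂(Measure.pi fun _ : {v : Fin d → ZMod (2 * L) // pPlus L (v i0)} => lam))
      ∂(Measure.pi fun _ : {v : Fin d → ZMod (2 * L) // pP L (v i0)} => lam),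
    integral_nonneg (fun p => mul_nonneg (hwPnonneg p) (Complex.normSq_nonneg _)), ?_⟩
  have h1 : (∫ σ, G σ ∂(Measure.pi fun _ : Fin d → ZMod (2 * L) => lam)) =
      ∫ x, G (Φ x)
        ∂((Measure.pi fun _ : {v : Fin d → ZMod (2 * L) // pP L (v i0)} => lam).prod
          ((Measure.pi fun _ : {v : Fin d → ZMod (2 * L) // pPlus L (v i0)} => lam).prod
           (Measure.pi fun _ : {v : Fin d → ZMod (2 * L) // pPlus L (v i0)} => lam))) := by
    rw [← mp.map_eq, integral_map mp.aemeasurable hGmeas.aestronglyMeasurable]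
  have h2 := integral_prod (fun x => G (Φ x)) hInt
  have h3 : ∀ p, (∫ y, G (Φ (p, y))
      ∂((Measure.pi fun _ : {v : Fin d → ZMod (2 * L) // pPlus L (v i0)} => lam).prod
        (Measure.pi fun _ : {v : Fin d → ZMod (2 * L) // pPlus L (v i0)} => lam))) =
      ((wP p * Complex.normSq (∫ t, g p t
        ∂(Measure.pi fun _ : {v : Fin d → ZMod (2 * L) // pPlus L (v i0)} => lam)) : ℝ) : ℂ) := by
    intro p
    have hpt : ∀ y : ({v : Fin d → ZMod (2 * L) // pPlus L (v i0)} → S) ×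
        ({v : Fin d → ZMod (2 * L) // pPlus L (v i0)} → S),
        G (Φ (p, y)) = ((wP p : ℝ) : ℂ) * ((starRingEnd ℂ) (g p y.1) * g p y.2) := by
      intro y
      rw [show Φ (p, y) = glue i0 p y.1 y.2 from hΦapp p y.1 y.2, hKey p y.1 y.2]
    simp only [hpt]
    rw [MeasureTheory.integral_const_mul,
      integral_prod_mul (fun s => (starRingEnd ℂ) (g p s)) (g p),
      integral_conj, ← Complex.normSq_eq_conj_mul_self, ← Complex.ofReal_mul]
  have h4 : (∫ σ, G σ ∂(Measure.pi fun _ : Fin d → ZMod (2 * L) => lam)) =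
      ((∫ p, wP p * Complex.normSq (∫ t, g p t
        ∂(Measure.pi fun _ : {v : Fin d → ZMod (2 * L) // pPlus L (v i0)} => lam))
        ∂(Measure.pi fun _ : {v : Fin d → ZMod (2 * L) // pP L (v i0)} => lam) : ℝ) : ℂ) := by
    rw [h1, h2]
    simp only [h3]
    exact integral_ofReal
  rw [hG] at h4
  exact h4

end RPaux

/-- **Reflection positivity through vertices.**  Consider the general nearest-neighbour spin
system on `𝕋_L^d` with finite spin measure space `(S, λ)` and bounded measurable symmetric
non-negative interaction `h` (not essentially zero, and with positive normalizing constant).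
Let `V₀ = {v : v₁ ∉ {1,…,L−1}}` and let `R` be the reflection `v₁ ↦ −v₁` (fixing the
hyperplanes `v₁ = 0` and `v₁ = L`).  Then for every bounded measurable `f : S^Λ → ℂ` which
depends only on `σ|_{V₀}`, the expectation `E(f(σ) · conj(f(Rσ)))` is a non-negative real
number.  The expectation is written as the ratio of the integral against the Boltzmann weight
and the partition function. -/
theorem reflection_positivity_through_vertices
    (d L : ℕ) (hd : 1 ≤ d) (hL : 1 ≤ L) [NeZero (2 * L)]
    {S : Type} [MeasurableSpace S] (lam : Measure S) [IsFiniteMeasure lam]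
    (h : S → S → ℝ)
    (hsymm : ∀ a b, h a b = h b a)
    (hnonneg : ∀ a b, 0 ≤ h a b)
    (hbdd : ∃ M : ℝ, ∀ a b, h a b ≤ M)
    (hmeas : Measurable (Function.uncurry h))
    (hne : 0 < ∫ a, ∫ b, h a b ∂lam ∂lam)
    (hZ : 0 < ∫ σ : (Fin d → ZMod (2 * L)) → S, nnWeight d (2 * L) h hsymm σ
        ∂(Measure.pi fun _ : Fin d → ZMod (2 * L) => lam))
    (f : ((Fin d → ZMod (2 * L)) → S) → ℂ)
    (hfmeas : Measurable f)
    (hfbdd : ∃ M : ℝ, ∀ σ, ‖f σ‖ ≤ M)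
    (hfdep : ∀ σ τ : (Fin d → ZMod (2 * L)) → S,
      (∀ v : Fin d → ZMod (2 * L),
        (∀ s : ℕ, 1 ≤ s → s ≤ L - 1 → v ⟨0, hd⟩ ≠ (s : ZMod (2 * L))) → σ v = τ v) →
      f σ = f τ) :
    ∃ r : ℝ, 0 ≤ r ∧
      (∫ σ : (Fin d → ZMod (2 * L)) → S,
          f σ * (starRingEnd ℂ)
              (f (fun v => σ (Function.update v ⟨0, hd⟩ (-(v ⟨0, hd⟩))))) *
            ((nnWeight d (2 * L) h hsymm σ : ℝ) : ℂ)
        ∂(Measure.pi fun _ : Fin d → ZMod (2 * L) => lam)) /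
      (((∫ σ : (Fin d → ZMod (2 * L)) → S, nnWeight d (2 * L) h hsymm σ
        ∂(Measure.pi fun _ : Fin d → ZMod (2 * L) => lam) : ℝ)) : ℂ) = (r : ℂ) := by
  classical
  have hS : Nonempty S := by
    by_contra hS
    rw [not_nonempty_iff] at hS
    rw [Measure.eq_zero_of_isEmpty lam] at hne
    simp at hne
  obtain ⟨s0⟩ := hS
  set i0 : Fin d := ⟨0, hd⟩ with hi0
  have hfdep' : ∀ σ τ : (Fin d → ZMod (2 * L)) → S,
      (∀ v, ¬ RPaux.pPlus L (v i0) → σ v = τ v) → f σ = f τ := by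
    intro σ τ hag
    refine hfdep σ τ (fun v hv => hag v ?_)
    rintro ⟨h1, h2⟩
    exact hv (v i0).val (by omega) (by omega) (ZMod.natCast_rightInverse (v i0)).symm
  obtain ⟨r0, hr0, hr0eq⟩ := RPaux.main hL i0 lam h hsymm hnonneg hbdd hmeas s0 f
    hfmeas hfbdd hfdep'
  refine ⟨r0 / (∫ σ : (Fin d → ZMod (2 * L)) → S, nnWeight d (2 * L) h hsymm σ
      ∂(Measure.pi fun _ : Fin d → ZMod (2 * L) => lam)),
    div_nonneg hr0 hZ.le, ?_⟩
  have hnum : (∫ σ : (Fin d → ZMod (2 * L)) → S,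
      f σ * (starRingEnd ℂ)
          (f (fun v => σ (Function.update v i0 (-(v i0))))) *
        ((nnWeight d (2 * L) h hsymm σ : ℝ) : ℂ)
      ∂(Measure.pi fun _ : Fin d → ZMod (2 * L) => lam)) = (r0 : ℂ) := hr0eq
  rw [hnum, Complex.ofReal_div]
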